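/- arXiv:2105.08013 — 2 statements merged into one kernel-verified Lean document; each statement's English description precedes it below -/
import Mathlib

section
/- Suppose variable j is independent of the remaining variables under the empirical distribution, i.e., p(z) = p_{{j}}(z_j) · p_{{1,…,d}∖{j}}(z_{−j}) for all z ∈ 𝒳. Then for every subject t and every u ⊆ {1,…,d}∖{j}, N_t(u∪{j}) / N_t(u) = p_{{j}}(x_{tj}), and consequently φ_{t,j} = −log₂ p_{{j}}(x_{tj}). -/
open Finset

variable {n d : ℕ} {X : Fin d → Type} [∀ j, Fintype (X j)] [∀ j, DecidableEq (X j)]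

/-- Number of subjects matching subject `t` on every variable in `u`. -/
def cohortN (x : Fin n → ∀ j, X j) (t : Fin n) (u : Finset (Fin d)) : ℕ :=
  (Finset.univ.filter fun i => ∀ j ∈ u, x i j = x t j).card

/-- Value function `val_t(u) = -log₂(N_t(u)/n)`. -/
noncomputable def uVal (x : Fin n → ∀ j, X j) (t : Fin n) (u : Finset (Fin d)) : ℝ :=
  -Real.logb 2 ((cohortN x t u : ℝ) / n)

/-- Uniqueness Shapley value of variable `j` for subject `t`. -/
noncomputable def uShap (x : Fin n → ∀ j, X j) (t : Fin n) (j : Fin d) : ℝ :=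
  (d : ℝ)⁻¹ * ∑ u ∈ ((Finset.univ : Finset (Fin d)).erase j).powerset,
    ((d - 1).choose u.card : ℝ)⁻¹ * (uVal x t (insert j u) - uVal x t u)

/-- Global uniqueness Shapley value. -/
noncomputable def uShapGlobal (x : Fin n → ∀ j, X j) (j : Fin d) : ℝ :=
  (n : ℝ)⁻¹ * ∑ t, uShap x t j

/-- Marginal empirical probability of observing `z` on the variables in `u`. -/
noncomputable def margP (x : Fin n → ∀ j, X j) (u : Finset (Fin d))
    (z : ∀ j : u, X j.1) : ℝ :=
  ((Finset.univ.filter fun i : Fin n => ∀ j : u, x i j.1 = z j).card : ℝ) / n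

/-- Empirical entropy of the variables in `u` (convention `0·log₂ 0 = 0` holds automatically). -/
noncomputable def emEnt (x : Fin n → ∀ j, X j) (u : Finset (Fin d)) : ℝ :=
  -∑ z : (∀ j : u, X j.1), margP x u z * Real.logb 2 (margP x u z)

lemma cohortN_pos (x : Fin n → ∀ j, X j) (t : Fin n) (u : Finset (Fin d)) :
    0 < cohortN x t u :=
  Finset.card_pos.2 ⟨t, by simp [cohortN]⟩

lemma margP_single (x : Fin n → ∀ j, X j) (t : Fin n) (j : Fin d) :
    margP x {j} (fun k => x t k.1) = (cohortN x t {j} : ℝ) / n := by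
  have e : (Finset.univ.filter fun i : Fin n =>
      ∀ k : ({j} : Finset (Fin d)), x i k.1 = x t k.1)
      = Finset.univ.filter fun i : Fin n => ∀ k ∈ ({j} : Finset (Fin d)), x i k = x t k := by
    apply Finset.filter_congr; intro i _; simp [Subtype.forall]
  unfold margP cohortN
  rw [e]

lemma key (hn : 1 ≤ n) (x : Fin n → ∀ j, X j) (j : Fin d)
    (hindep : ∀ z : ∀ j, X j,
      margP x Finset.univ (fun k => z k.1)
        = margP x {j} (fun k => z k.1) * margP x (Finset.univ.erase j) (fun k => z k.1))
    (t : Fin n) {u : Finset (Fin d)} (hu : u ⊆ (Finset.univ : Finset (Fin d)).erase j) :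
    (cohortN x t (insert j u) : ℝ)
      = margP x {j} (fun k => x t k.1) * cohortN x t u := by
  classical
  have hn' : (0:ℝ) < n := by exact_mod_cast hn
  set S : Finset (∀ k, X k) :=
    Finset.univ.filter (fun z : ∀ k, X k => z j = x t j ∧ ∀ k ∈ u, z k = x t k) with hS
  -- count form of independence
  have hcount : ∀ z : ∀ k, X k,
      ((Finset.univ.filter fun i : Fin n => x i = z).card : ℝ)
        = ((Finset.univ.filter fun i : Fin n => x i j = z j).card : ℝ)
          * ((Finset.univ.filter fun i : Fin n => ∀ k ∈ Finset.univ.erase j, x i k = z k).card : ℝ) / n := by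
    intro z
    have h := hindep z
    have e1 : (Finset.univ.filter fun i : Fin n =>
        ∀ k : (Finset.univ : Finset (Fin d)), x i k.1 = z k.1)
        = Finset.univ.filter fun i : Fin n => x i = z := by
      apply Finset.filter_congr; intro i _
      constructor
      · intro h'; funext k; exact h' ⟨k, Finset.mem_univ k⟩
      · intro h' k; rw [h']
    have e2 : (Finset.univ.filter fun i : Fin n =>
        ∀ k : ((Finset.univ : Finset (Fin d)).erase j), x i k.1 = z k.1)
        = Finset.univ.filter fun i : Fin n => ∀ k ∈ Finset.univ.erase j, x i k = z k := by
      apply Finset.filter_congr; intro i _; simp [Subtype.forall]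
    have e3 : (Finset.univ.filter fun i : Fin n =>
        ∀ k : ({j} : Finset (Fin d)), x i k.1 = z k.1)
        = Finset.univ.filter fun i : Fin n => x i j = z j := by
      apply Finset.filter_congr; intro i _; simp [Subtype.forall]
    unfold margP at h
    rw [e1, e2, e3] at h
    have h2 : ((Finset.univ.filter fun i : Fin n => x i = z).card : ℝ)
        = ((Finset.univ.filter fun i : Fin n => x i = z).card : ℝ) / n * n := by
      field_simp
    rw [h2, h]
    rw [div_mul_div_comm, div_mul_eq_mul_div, mul_div_mul_right _ _ hn'.ne']
  -- sum of full counts over S gives N(insert j u)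
  have hA : ∑ z ∈ S, ((Finset.univ.filter fun i : Fin n => x i = z).card : ℝ)
      = (cohortN x t (insert j u) : ℝ) := by
    unfold cohortN
    push_cast [Finset.card_filter]
    rw [Finset.sum_comm]
    apply Finset.sum_congr rfl
    intro i _
    rw [Finset.sum_ite_eq S (x i) (fun _ => (1:ℝ))]
    apply if_congr _ rfl rfl
    simp [hS, Finset.forall_mem_insert, and_comm]
  -- on S the j-count is constant
  have hB : ∀ z ∈ S, ((Finset.univ.filter fun i : Fin n => x i j = z j).card : ℝ)
      = (cohortN x t {j} : ℝ) := by
    intro z hz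
    rw [hS, Finset.mem_filter] at hz
    unfold cohortN
    norm_cast
    congr 1
    apply Finset.filter_congr; intro i _
    simp [hz.2.1]
  -- sum of erase-counts over S gives N(u)
  have hC : ∑ z ∈ S, ((Finset.univ.filter fun i : Fin n =>
        ∀ k ∈ Finset.univ.erase j, x i k = z k).card : ℝ)
      = (cohortN x t u : ℝ) := by
    unfold cohortN
    push_cast [Finset.card_filter]
    rw [Finset.sum_comm]
    apply Finset.sum_congr rfl
    intro i _
    have hfil : S.filter (fun z => ∀ k ∈ Finset.univ.erase j, x i k = z k)
        = if (∀ k ∈ u, x i k = x t k) then {Function.update (x i) j (x t j)} else ∅ := by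
      ext z
      rw [Finset.mem_filter, hS, Finset.mem_filter]
      by_cases hc : ∀ k ∈ u, x i k = x t k
      · simp only [if_pos hc, Finset.mem_singleton]
        constructor
        · rintro ⟨⟨_, h1, _⟩, h3⟩
          funext k
          by_cases hk : k = j
          · subst hk; simp [Function.update_self, h1]
          · rw [Function.update_of_ne hk]
            exact (h3 k (Finset.mem_erase.2 ⟨hk, Finset.mem_univ k⟩)).symm
        · rintro rfl
          refine ⟨⟨Finset.mem_univ _, Function.update_self _ _ _, ?_⟩, ?_⟩
          · intro k hk
            have hkj : k ≠ j := (Finset.mem_erase.1 (hu hk)).1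
            rw [Function.update_of_ne hkj]; exact hc k hk
          · intro k hk
            have hkj : k ≠ j := (Finset.mem_erase.1 hk).1
            rw [Function.update_of_ne hkj]
      · simp only [if_neg hc, Finset.notMem_empty, iff_false]
        rintro ⟨⟨_, h1, h2⟩, h3⟩
        apply hc
        intro k hk
        have hkj : k ≠ j := (Finset.mem_erase.1 (hu hk)).1
        rw [h3 k (Finset.mem_erase.2 ⟨hkj, Finset.mem_univ k⟩)]
        exact h2 k hk
    have : ∑ z ∈ S, (if ∀ k ∈ Finset.univ.erase j, x i k = z k then (1:ℝ) else 0)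
        = ((S.filter (fun z => ∀ k ∈ Finset.univ.erase j, x i k = z k)).card : ℝ) := by
      rw [Finset.card_filter]; push_cast; rfl
    rw [this, hfil]
    split_ifs with hc <;> simp
  -- combine
  rw [← hA, margP_single]
  have : ∀ z ∈ S, ((Finset.univ.filter fun i : Fin n => x i = z).card : ℝ)
      = (cohortN x t {j} : ℝ) / n * ((Finset.univ.filter fun i : Fin n =>
        ∀ k ∈ Finset.univ.erase j, x i k = z k).card : ℝ) := by
    intro z hz
    rw [hcount z, hB z hz]
    ring
  rw [Finset.sum_congr rfl this, ← Finset.mul_sum, hC]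

/-- if variable `j` is independent of the remaining variables under the
empirical distribution, then for every subject `t` and every `u ⊆ {1,…,d}∖{j}` the cohort
ratio `N_t(u∪{j})/N_t(u)` equals `p_{{j}}(x_{tj})`, and `φ_{t,j} = -log₂ p_{{j}}(x_{tj})`. -/
theorem uniquenessShapley_of_indep
    (n d : ℕ) (hn : 1 ≤ n) (hd : 1 ≤ d)
    (X : Fin d → Type) [∀ j, Fintype (X j)] [∀ j, DecidableEq (X j)]
    (x : Fin n → ∀ j, X j) (j : Fin d)
    (hindep : ∀ z : ∀ j, X j,
      margP x Finset.univ (fun k => z k.1)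
        = margP x {j} (fun k => z k.1) * margP x (Finset.univ.erase j) (fun k => z k.1)) :
    ∀ t : Fin n,
      (∀ u ⊆ (Finset.univ : Finset (Fin d)).erase j,
        (cohortN x t (insert j u) : ℝ) / (cohortN x t u : ℝ)
          = margP x {j} (fun k => x t k.1)) ∧
      uShap x t j = -Real.logb 2 (margP x {j} (fun k => x t k.1)) := by
  intro t
  have hn' : (0:ℝ) < n := by exact_mod_cast hn
  set p : ℝ := margP x {j} (fun k => x t k.1) with hpdef
  have hp : 0 < p := by
    rw [hpdef, margP_single]
    have := cohortN_pos x t ({j} : Finset (Fin d))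
    positivity
  constructor
  · intro u hu
    have hNu : (0:ℝ) < (cohortN x t u : ℝ) := by exact_mod_cast cohortN_pos x t u
    rw [key hn x j hindep t hu, mul_div_assoc, div_self hNu.ne', mul_one]
  · have hdiff : ∀ u ⊆ (Finset.univ : Finset (Fin d)).erase j,
        uVal x t (insert j u) - uVal x t u = -Real.logb 2 p := by
      intro u hu
      have hNu : (0:ℝ) < (cohortN x t u : ℝ) := by exact_mod_cast cohortN_pos x t u
      unfold uVal
      rw [key hn x j hindep t hu, mul_div_assoc,
        Real.logb_mul hp.ne' (by positivity)]
      ring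
    unfold uShap
    rw [Finset.sum_congr rfl (fun u hu => by
      rw [hdiff u (Finset.mem_powerset.1 hu)])]
    rw [Finset.sum_powerset_apply_card (fun m => ((d - 1).choose m : ℝ)⁻¹ * (-Real.logb 2 p))]
    have hcard : ((Finset.univ : Finset (Fin d)).erase j).card = d - 1 := by
      simp [Finset.card_erase_of_mem]
    rw [hcard]
    have hterm : ∀ m ∈ Finset.range (d - 1 + 1),
        (d - 1).choose m • (((d - 1).choose m : ℝ)⁻¹ * (-Real.logb 2 p))
          = -Real.logb 2 p := by
      intro m hm
      have hpos : 0 < (d - 1).choose m :=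
        Nat.choose_pos (Nat.lt_succ_iff.1 (Finset.mem_range.1 hm))
      rw [nsmul_eq_mul, ← mul_assoc, mul_inv_cancel₀ (by exact_mod_cast hpos.ne'), one_mul]
    rw [Finset.sum_congr rfl hterm, Finset.sum_const, Finset.card_range,
      (by omega : d - 1 + 1 = d), nsmul_eq_mul,
      inv_mul_cancel_left₀ (by positivity : (d:ℝ) ≠ 0)]
end

section
/- For every variable j ∈ {1,…,d} and every nonempty subset v ⊆ {1,…,n}, the subset-aggregated uniqueness Shapley value can be written in terms of cross entropies: φ^v_j = (1/d) Σ_{u ⊆ {1,…,d}∖{j}} binom(d−1,|u|)⁻¹ (H(p_{u∪{j}}, q_{u∪{j}}) − H(p_u, q_u)). -/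
open Finset

variable {n d : ℕ} {X : Fin d → Type} [∀ j, Fintype (X j)] [∀ j, DecidableEq (X j)]

/-- Empirical distribution `q_w` of the variables in `w` over the subset `v` of subjects. -/
noncomputable def subQ (x : Fin n → ∀ j, X j) (v : Finset (Fin n)) (w : Finset (Fin d))
    (z : ∀ j : w, X j.1) : ℝ :=
  ((v.filter fun t => ∀ j : w, x t j.1 = z j).card : ℝ) / v.card

/-- Cross entropy `H(p_w, q_w) = -Σ_z q_w(z) log₂ p_w(z)`; terms with `q_w(z) = 0` vanish,
so the sum over all `z` agrees with the sum over `z` with `q_w(z) > 0`. -/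
noncomputable def crossEnt (x : Fin n → ∀ j, X j) (v : Finset (Fin n))
    (w : Finset (Fin d)) : ℝ :=
  -∑ z : (∀ j : w, X j.1), subQ x v w z * Real.logb 2 (margP x w z)

lemma cohort_eq_margP (x : Fin n → ∀ j, X j) (t : Fin n) (w : Finset (Fin d)) :
    ((cohortN x t w : ℝ)) / n = margP x w (fun j => x t j.1) := by
  unfold cohortN margP
  congr 2
  congr 1
  apply Finset.filter_congr
  intro i _
  simp [Subtype.forall]

lemma sum_restrict_eq (v : Finset (Fin n)) (x : Fin n → ∀ j, X j)
    (w : Finset (Fin d)) (f : (∀ j : w, X j.1) → ℝ) :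
    ∑ t ∈ v, f (fun j => x t j.1)
      = ∑ z : (∀ j : w, X j.1),
          ((v.filter fun t => ∀ j : w, x t j.1 = z j).card : ℝ) * f z := by
  calc ∑ t ∈ v, f (fun j => x t j.1)
      = ∑ z : (∀ j : w, X j.1),
          ∑ t ∈ v.filter (fun t => (fun j : w => x t j.1) = z), f (fun j => x t j.1) :=
        (Finset.sum_fiberwise_of_maps_to (fun t _ => Finset.mem_univ _) _).symm
    _ = ∑ z : (∀ j : w, X j.1),
          ((v.filter fun t => ∀ j : w, x t j.1 = z j).card : ℝ) * f z := by
        refine Finset.sum_congr rfl fun z _ => ?_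
        rw [Finset.sum_congr rfl (fun t ht => by
          rw [show (fun j : w => x t j.1) = z from (Finset.mem_filter.1 ht).2])]
        rw [Finset.sum_const, nsmul_eq_mul]
        congr 3
        apply Finset.filter_congr
        intro t _
        simp [funext_iff]

lemma sum_uVal (x : Fin n → ∀ j, X j) (v : Finset (Fin n)) (hv : v.Nonempty)
    (w : Finset (Fin d)) :
    ∑ t ∈ v, uVal x t w = (v.card : ℝ) * crossEnt x v w := by
  have hc : (v.card : ℝ) ≠ 0 := by
    exact_mod_cast Finset.card_ne_zero.2 hv
  calc ∑ t ∈ v, uVal x t w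
      = ∑ t ∈ v, (fun z => -Real.logb 2 (margP x w z)) (fun j : w => x t j.1) := by
        refine Finset.sum_congr rfl fun t _ => ?_
        simp only [uVal, cohort_eq_margP]
    _ = ∑ z : (∀ j : w, X j.1),
          ((v.filter fun t => ∀ j : w, x t j.1 = z j).card : ℝ)
            * (-Real.logb 2 (margP x w z)) :=
        sum_restrict_eq v x w fun z => -Real.logb 2 (margP x w z)
    _ = (v.card : ℝ) * crossEnt x v w := by
        unfold crossEnt subQ
        rw [mul_neg, Finset.mul_sum, ← Finset.sum_neg_distrib]
        refine Finset.sum_congr rfl fun z _ => ?_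
        field_simp

/-- the subset-aggregated uniqueness Shapley value
`φ^v_j = (1/|v|) Σ_{t∈v} φ_{t,j}` equals the weighted sum of cross-entropy differences. -/
theorem subsetUniquenessShapley_eq_crossEntropies
    (n d : ℕ) (hn : 1 ≤ n) (hd : 1 ≤ d)
    (X : Fin d → Type) [∀ j, Fintype (X j)] [∀ j, DecidableEq (X j)]
    (x : Fin n → ∀ j, X j) (j : Fin d)
    (v : Finset (Fin n)) (hv : v.Nonempty) :
    (v.card : ℝ)⁻¹ * ∑ t ∈ v, uShap x t j
      = (d : ℝ)⁻¹ * ∑ u ∈ ((Finset.univ : Finset (Fin d)).erase j).powerset,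
          ((d - 1).choose u.card : ℝ)⁻¹
            * (crossEnt x v (insert j u) - crossEnt x v u) := by
  have hc : (v.card : ℝ) ≠ 0 := by
    exact_mod_cast Finset.card_ne_zero.2 hv
  have h1 : ∑ t ∈ v, uShap x t j
      = (d : ℝ)⁻¹ * ∑ u ∈ ((Finset.univ : Finset (Fin d)).erase j).powerset,
          ((d - 1).choose u.card : ℝ)⁻¹
            * ((∑ t ∈ v, uVal x t (insert j u)) - ∑ t ∈ v, uVal x t u) := by
    simp only [uShap]
    rw [← Finset.mul_sum, Finset.sum_comm]
    congr 1
    refine Finset.sum_congr rfl fun u _ => ?_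
    rw [← Finset.mul_sum, Finset.sum_sub_distrib]
  rw [h1]
  simp only [sum_uVal x v hv]
  rw [show ∀ S : Finset (Finset (Fin d)),
      ∑ u ∈ S, ((d - 1).choose u.card : ℝ)⁻¹
          * ((v.card : ℝ) * crossEnt x v (insert j u)
              - (v.card : ℝ) * crossEnt x v u)
        = (v.card : ℝ) * ∑ u ∈ S, ((d - 1).choose u.card : ℝ)⁻¹
          * (crossEnt x v (insert j u) - crossEnt x v u) from fun S => by
      rw [Finset.mul_sum]; exact Finset.sum_congr rfl fun u _ => by ring]
  field_simp
end
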